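/- Let G : ℝⁿ → S^m be differentiable at x̄ with G(x̄) of rank r < m, and let E ∈ ℝ^{m×(m−r)} span Ker G(x̄) orthonormally. The linear map ψ: ℝⁿ → S^{m−r}, ψ(d) = Eᵀ (DG(x̄)[d]) E, is surjective if and only if Im DG(x̄) + lin(T_{S^m_+}(G(x̄))) = S^m. -/
import Mathlib


open Matrix

lemma sum_smul_isSymm {n m : ℕ} (A : Fin n → Matrix (Fin m) (Fin m) ℝ)
    (hA : ∀ ℓ, (A ℓ).IsSymm) (d : Fin n → ℝ) : (∑ ℓ, d ℓ • A ℓ).IsSymm := by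
  unfold Matrix.IsSymm
  rw [Matrix.transpose_sum]
  exact Finset.sum_congr rfl fun ℓ _ => by rw [Matrix.transpose_smul, hA ℓ]

/-- Let `G(x̄)` be PSD of rank `r < m`, with partial derivatives `A ℓ = ∂G/∂x_ℓ(x̄)`,
and let `E` span `Ker G(x̄)` orthonormally.  The map `ψ(d) = Eᵀ (DG(x̄)[d]) E` is
surjective onto `S^{m-r}` iff `Im DG(x̄) + lin(T_{S^m_+}(G(x̄))) = S^m`, where the
lineality space is `{N ∈ S^m : Eᵀ N E = 0}`. -/
theorem psi_surjective_iff_nondegeneracy (n m r : ℕ) (hr : r < m)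
    (Gbar : Matrix (Fin m) (Fin m) ℝ) (hG : Gbar.PosSemidef) (hrank : Gbar.rank = r)
    (E : Matrix (Fin m) (Fin (m - r)) ℝ) (hE : Eᵀ * E = 1) (hker : Gbar * E = 0)
    (A : Fin n → Matrix (Fin m) (Fin m) ℝ) (hA : ∀ ℓ, (A ℓ).IsSymm) :
    (∀ S : Matrix (Fin (m - r)) (Fin (m - r)) ℝ, S.IsSymm →
        ∃ d : Fin n → ℝ, Eᵀ * (∑ ℓ, d ℓ • A ℓ) * E = S) ↔
    (∀ S : Matrix (Fin m) (Fin m) ℝ, S.IsSymm →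
        ∃ (d : Fin n → ℝ) (N : Matrix (Fin m) (Fin m) ℝ),
          N.IsSymm ∧ Eᵀ * N * E = 0 ∧ S = (∑ ℓ, d ℓ • A ℓ) + N) := by
  constructor
  · intro h S hS
    obtain ⟨d, hd⟩ := h (Eᵀ * S * E) (by
      unfold Matrix.IsSymm
      rw [Matrix.transpose_mul, Matrix.transpose_mul, Matrix.transpose_transpose, hS,
        Matrix.mul_assoc])
    refine ⟨d, S - ∑ ℓ, d ℓ • A ℓ, ?_, ?_, by abel⟩
    · unfold Matrix.IsSymm
      rw [Matrix.transpose_sub, hS, sum_smul_isSymm A hA d]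
    · rw [Matrix.mul_sub, Matrix.sub_mul, hd, sub_self]
  · intro h S hS
    obtain ⟨d, N, hNs, hN0, hSd⟩ := h (E * S * Eᵀ) (by
      unfold Matrix.IsSymm
      rw [Matrix.transpose_mul, Matrix.transpose_mul, Matrix.transpose_transpose, hS,
        Matrix.mul_assoc])
    refine ⟨d, ?_⟩
    have : Eᵀ * (E * S * Eᵀ) * E = S := by
      rw [Matrix.mul_assoc, Matrix.mul_assoc E S, Matrix.mul_assoc E, Matrix.mul_assoc S, hE,
        Matrix.mul_one, ← Matrix.mul_assoc, hE, Matrix.one_mul]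
    rw [hSd, Matrix.mul_add, Matrix.add_mul, hN0, add_zero] at this
    exact this
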